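/- Let a, b be distinct points of H = {x ∈ R^n : Σ x_i = 0}. Set I = {i ∈ [n] : a_i < b_i}. Then I is nonempty and a proper subset of [n], and for every x ∈ H one has max_i (x_i - a_i) ≤ max_i (x_i - b_i) if and only if max_{i∈I} (x_i - a_i) ≤ max_{j∉I} (x_j - b_j). -/
import Mathlib


noncomputable def tmax {n : ℕ} [NeZero n] (f : Fin n → ℝ) : ℝ :=
  Finset.univ.sup' Finset.univ_nonempty f

open Finset in
theorem stmt5 {n : ℕ} [NeZero n] (a b : Fin n → ℝ)
    (ha : ∑ i, a i = 0) (hb : ∑ i, b i = 0) (hab : a ≠ b) :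
    ∃ (hI : (Finset.univ.filter (fun i => a i < b i)).Nonempty)
      (hJ : ((Finset.univ.filter (fun i => a i < b i))ᶜ).Nonempty),
      ∀ x : Fin n → ℝ, ∑ i, x i = 0 →
        (tmax (fun i => x i - a i) ≤ tmax (fun i => x i - b i) ↔
          (Finset.univ.filter (fun i => a i < b i)).sup' hI (fun i => x i - a i) ≤
            ((Finset.univ.filter (fun i => a i < b i))ᶜ).sup' hJ (fun j => x j - b j)) := by
  set I := Finset.univ.filter (fun i => a i < b i) with hIdef
  have hI : I.Nonempty := by
    by_contra h
    rw [not_nonempty_iff_eq_empty, filter_eq_empty_iff] at h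
    push_neg at h
    apply hab
    funext i
    have := (Finset.sum_eq_sum_iff_of_le (fun i _ => h (mem_univ i))).1
      (hb.trans ha.symm) i (mem_univ i)
    linarith
  have hJ : Iᶜ.Nonempty := by
    by_contra h
    rw [not_nonempty_iff_eq_empty, Finset.compl_eq_empty_iff] at h
    have hall : ∀ i ∈ (Finset.univ : Finset (Fin n)), a i < b i := by
      intro i _
      have : i ∈ I := by rw [h]; exact mem_univ i
      exact (mem_filter.1 this).2
    have := Finset.sum_lt_sum_of_nonempty Finset.univ_nonempty hall
    rw [ha, hb] at this
    exact lt_irrefl 0 this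
  refine ⟨hI, hJ, fun x hx => ?_⟩
  have key : ∀ f : Fin n → ℝ, tmax f = I.sup' hI f ⊔ Iᶜ.sup' hJ f := by
    intro f
    rw [tmax, ← Finset.sup'_union hI hJ f]
    congr 1
    · rw [Finset.union_compl]
  rw [key, key]
  set A := I.sup' hI (fun i => x i - a i) with hA
  set B := Iᶜ.sup' hJ (fun i => x i - b i) with hB
  have hA' : I.sup' hI (fun i => x i - b i) < A := by
    rw [Finset.sup'_lt_iff]
    intro i hi
    have h1 : a i < b i := (mem_filter.1 hi).2
    have h2 := Finset.le_sup' (fun i => x i - a i) hi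
    rw [← hA] at h2
    linarith
  have hB' : Iᶜ.sup' hJ (fun i => x i - a i) ≤ B := by
    apply Finset.sup'_le
    intro i hi
    have h1 : ¬ a i < b i := by
      have := Finset.mem_compl.1 hi
      simpa [hIdef] using this
    have h2 := Finset.le_sup' (fun i => x i - b i) hi
    rw [← hB] at h2
    linarith
  constructor
  · intro h
    have hA_le : A ≤ I.sup' hI (fun i => x i - b i) ⊔ B := le_sup_left.trans h
    rcases le_sup_iff.1 hA_le with h2 | h2
    · exact absurd h2 (not_le.2 hA')
    · exact h2
  · intro h
    exact sup_le (h.trans le_sup_right) (hB'.trans le_sup_right)
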